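/- Let t > 0, 0 < w < 1, and n ≥ 0 an integer. Then the monic Meixner polynomials satisfy the polynomial identity in x: (x+t)·M_{n+1}(x; t+1, w) = M_{n+2}(x; t, w) − ((n+t+1)/(w−1))·M_{n+1}(x; t, w). -/

import Mathlib

open Polynomial

/-- The monic Meixner polynomial
`M_n(x; t, w) = Σ_{k=0}^{n} C(n,k) (t+k)_{n−k} (w/(w−1))^{n−k} ∏_{j=0}^{k−1}(x−j)`. -/
noncomputable def meixner (t w : ℝ) (n : ℕ) : Polynomial ℝ :=
  ∑ k ∈ Finset.range (n + 1),
    Polynomial.C ((n.choose k : ℝ) * (ascPochhammer ℝ (n - k)).eval (t + (k : ℝ)) *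
        (w / (w - 1)) ^ (n - k)) *
      ∏ j ∈ Finset.range k, (Polynomial.X - Polynomial.C (j : ℝ))

private lemma asc_left (m : ℕ) (x : ℝ) :
    (ascPochhammer ℝ (m + 1)).eval x = x * (ascPochhammer ℝ m).eval (x + 1) := by
  simp [ascPochhammer_succ_left, eval_comp]

/-- Basis polynomials `P_k(x) = ∏_{j<k} (x - j)`. -/
noncomputable def Pb (k : ℕ) : Polynomial ℝ :=
  ∏ j ∈ Finset.range k, (X - C (j : ℝ))

private lemma Pb_mul (t : ℝ) (k : ℕ) :
    (X + C t) * Pb k = Pb (k + 1) + C ((k : ℝ) + t) * Pb k := by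
  simp only [Pb, Finset.prod_range_succ, C_add]
  ring

/-- the Christoffel-transform relation for monic Meixner polynomials:
`(x+t)·M_{n+1}(x;t+1,w) = M_{n+2}(x;t,w) − ((n+t+1)/(w−1))·M_{n+1}(x;t,w)`. -/
theorem stmt_9 (t w : ℝ) (ht : 0 < t) (hw0 : 0 < w) (hw1 : w < 1) (n : ℕ) :
    (Polynomial.X + Polynomial.C t) * meixner (t + 1) w (n + 1)
      = meixner t w (n + 2) -
        Polynomial.C (((n : ℝ) + t + 1) / (w - 1)) * meixner t w (n + 1) := by
  have hw : w - 1 ≠ 0 := by linarith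
  have hkey : w / (w - 1) - 1 / (w - 1) = 1 := by field_simp
  set a : ℕ → ℝ := fun k =>
    (((n+1).choose k : ℝ) * (ascPochhammer ℝ (n+1-k)).eval (t+1+(k:ℝ)) * (w/(w-1))^(n+1-k))
    with ha
  set b : ℕ → ℝ := fun k =>
    (((n+2).choose k : ℝ) * (ascPochhammer ℝ (n+2-k)).eval (t+(k:ℝ)) * (w/(w-1))^(n+2-k))
    with hb
  set d : ℕ → ℝ := fun k =>
    (((n+1).choose k : ℝ) * (ascPochhammer ℝ (n+1-k)).eval (t+(k:ℝ)) * (w/(w-1))^(n+1-k))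
    with hd
  have L : meixner (t+1) w (n+1) = ∑ k ∈ Finset.range (n+2), C (a k) * Pb k := rfl
  have R1 : meixner t w (n+2) = ∑ k ∈ Finset.range (n+3), C (b k) * Pb k := rfl
  have ha2 : a (n+2) = 0 := by
    simp [ha, Nat.choose_succ_self]
  have hd2 : d (n+2) = 0 := by
    simp [hd, Nat.choose_succ_self]
  have R2 : C (((n:ℝ) + t + 1) / (w-1)) * meixner t w (n+1)
      = ∑ k ∈ Finset.range (n+3), C (((n:ℝ) + t + 1) / (w-1) * d k) * Pb k := by
    show C (((n:ℝ) + t + 1) / (w-1)) * ∑ k ∈ Finset.range (n+2), C (d k) * Pb k = _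
    rw [Finset.mul_sum, Finset.sum_range_succ _ (n+2), hd2]
    simp [C_mul, mul_assoc]
  calc (X + C t) * meixner (t+1) w (n+1)
      = ∑ k ∈ Finset.range (n+2), (C (a k) * Pb (k+1) + C (a k) * C ((k:ℝ)+t) * Pb k) := by
        rw [L, Finset.mul_sum]
        refine Finset.sum_congr rfl fun k _ => ?_
        rw [mul_left_comm, Pb_mul, mul_add]
        ring
    _ = (∑ k ∈ Finset.range (n+2), C (a k) * Pb (k+1))
        + ∑ k ∈ Finset.range (n+2), C (a k) * C ((k:ℝ)+t) * Pb k := Finset.sum_add_distrib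
    _ = (∑ k ∈ Finset.range (n+3), if k = 0 then 0 else C (a (k-1)) * Pb k)
        + ∑ k ∈ Finset.range (n+3), C (a k) * C ((k:ℝ)+t) * Pb k := by
        rw [Finset.sum_range_succ' (fun k => if k = 0 then (0 : Polynomial ℝ) else C (a (k-1)) * Pb k) (n+2)]
        rw [Finset.sum_range_succ (fun k => C (a k) * C ((k:ℝ)+t) * Pb k) (n+2)]
        simp [ha2]
    _ = ∑ k ∈ Finset.range (n+3),
          ((if k = 0 then 0 else C (a (k-1)) * Pb k) + C (a k) * C ((k:ℝ)+t) * Pb k) :=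
        Finset.sum_add_distrib.symm
    _ = ∑ k ∈ Finset.range (n+3),
          (C (b k) * Pb k - C (((n:ℝ) + t + 1) / (w-1) * d k) * Pb k) := by
        refine Finset.sum_congr rfl fun k hk => ?_
        have hk' : k ≤ n + 2 := by
          have := Finset.mem_range.mp hk; omega
        match k with
        | 0 =>
          rw [← C_mul, if_pos rfl, zero_add, ← sub_mul]
          congr 1
          rw [← C_sub]
          congr 1
          simp only [ha, hb, hd]
          norm_num
          rw [show n + 2 = n + 1 + 1 from rfl]
          have hrel0 : t * (ascPochhammer ℝ (n+1)).eval (t+1)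
              = (ascPochhammer ℝ (n+1)).eval t * (t + (↑(n+1) : ℝ)) := by
            rw [← asc_left, ascPochhammer_succ_eval]
          rw [ascPochhammer_succ_eval (n+1) t]
          push_cast at hrel0 ⊢
          linear_combination (w/(w-1))^(n+1) * hrel0
            - ((ascPochhammer ℝ (n+1)).eval t * (t + (n:ℝ) + 1) * (w/(w-1))^(n+1)) * hkey
        | (m+1) =>
          rw [← C_mul, if_neg (Nat.succ_ne_zero m), Nat.add_sub_cancel, ← add_mul, ← sub_mul]
          congr 1
          rw [← C_add, ← C_sub]
          congr 1
          have hm : m ≤ n + 1 := by omega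
          rcases Nat.lt_or_ge m (n+1) with hmn | hmn
          · -- m ≤ n
            obtain ⟨r, rfl⟩ : ∃ r, n = m + r := ⟨n - m, by omega⟩
            simp only [ha, hb, hd]
            rw [show m + r + 1 - m = r + 1 from by omega,
              show m + r + 2 - (m+1) = r + 1 from by omega,
              show m + r + 1 - (m+1) = r from by omega]
            have hpas : ((m+r+2).choose (m+1) : ℝ)
                = ((m+r+1).choose m : ℝ) + ((m+r+1).choose (m+1) : ℝ) := by
              rw [show m+r+2 = (m+r+1)+1 from rfl, Nat.choose_succ_succ']
              push_cast; ring
            rw [hpas]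
            push_cast
            rw [show t + ((m:ℝ)+1) = t + (m:ℝ) + 1 from by ring,
              show t + 1 + ((m:ℝ)+1) = t + (m:ℝ) + 2 from by ring,
              show t + 1 + (m:ℝ) = t + (m:ℝ) + 1 from by ring,
              ascPochhammer_succ_eval r (t+(m:ℝ)+1)]
            have hrel : (t+(m:ℝ)+1) * (ascPochhammer ℝ r).eval (t+(m:ℝ)+2)
                = (ascPochhammer ℝ r).eval (t+(m:ℝ)+1) * ((t+(m:ℝ)+1) + (r:ℝ)) := by
              rw [show t+(m:ℝ)+2 = (t+(m:ℝ)+1)+1 from by ring, ← asc_left,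
                ascPochhammer_succ_eval]
            linear_combination (((m+r+1).choose (m+1) : ℝ) * (w/(w-1))^r) * hrel
              - (((m+r+1).choose (m+1) : ℝ) * (ascPochhammer ℝ r).eval (t+(m:ℝ)+1)
                  * (t + (m:ℝ) + (r:ℝ) + 1) * (w/(w-1))^r) * hkey
          · -- m = n + 1
            have : m = n + 1 := by omega
            subst this
            simp [ha, hb, hd, Nat.choose_succ_self, Nat.sub_self]
    _ = (∑ k ∈ Finset.range (n+3), C (b k) * Pb k)
        - ∑ k ∈ Finset.range (n+3), C (((n:ℝ) + t + 1) / (w-1) * d k) * Pb k :=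
        Finset.sum_sub_distrib _ _
    _ = meixner t w (n + 2) - C (((n:ℝ) + t + 1) / (w-1)) * meixner t w (n+1) := by
        rw [R1, R2]
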